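/- Fix a natural number e. Then, as n → ∞, the real sequence f(0; n) / (4^n · n^e) converges to 3^e / e!, where f(t; n) = Σ_{i=0}^{n} (Σ_{m=0}^{e} P(m, i, n))^2 · P(i, t, n). -/

import Mathlib

open Finset Filter Topology

/-- Krawtchouk polynomial (alphabet size q = 4) evaluated at integer points:
`P(i, t, n) = Σ_{j=0}^{i} (-1)^j · 3^{i-j} · C(t, j) · C(n-t, i-j)`. -/
def K (i t n : ℕ) : ℤ :=
  ∑ j ∈ Finset.range (i + 1),
    (-1 : ℤ) ^ j * 3 ^ (i - j) * (t.choose j) * ((n - t).choose (i - j))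

/-- Li–Xing coefficient `f_{t;n} = (Σ_{m=0}^{e} P(m, t, n))²` for correction radius `e`. -/
def fCoeff (e t n : ℕ) : ℤ := (∑ m ∈ Finset.range (e + 1), K m t n) ^ 2

/-- Li–Xing function `f(t; n) = Σ_{i=0}^{n} f_{i;n} · P(i, t, n)`. -/
def fVal (e t n : ℕ) : ℤ :=
  ∑ i ∈ Finset.range (n + 1), fCoeff e i n * K i t n

open Polynomial in
section

lemma choose_sub_comm (m p q : ℕ) :
    m.choose p * (m - p).choose q = m.choose q * (m - q).choose p := by
  rcases le_or_gt (p + q) m with h | h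
  · have h1 := Nat.choose_mul (n := m) (k := p + q) (s := p) (Nat.le_add_right p q)
    have h2 := Nat.choose_mul (n := m) (k := p + q) (s := q) (Nat.le_add_left q p)
    rw [Nat.add_sub_cancel_left] at h1
    rw [Nat.add_sub_cancel] at h2
    rw [← h1, ← h2, Nat.choose_symm_add]
  · rcases le_or_gt p m with hp | hp
    · rcases le_or_gt q m with hq | hq
      · rw [Nat.choose_eq_zero_of_lt (by omega : m - p < q),
          Nat.choose_eq_zero_of_lt (by omega : m - q < p)]
        ring
      · rw [Nat.choose_eq_zero_of_lt hq]; simp [Nat.choose_eq_zero_of_lt (by omega : m - p < q)]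
    · rw [Nat.choose_eq_zero_of_lt hp]; simp [Nat.choose_eq_zero_of_lt (by omega : m - q < p)]

lemma nat_id {n i a j : ℕ} (hj1 : j ≤ i) (hj2 : j ≤ a) (hi : i ≤ n) :
    n.choose i * (i.choose j * (n - i).choose (a - j)) =
      n.choose a * (a.choose j * (n - a).choose (i - j)) := by
  rw [← Nat.mul_assoc, ← Nat.mul_assoc, Nat.choose_mul hj1]
  rcases le_or_gt a n with ha | ha
  · rw [Nat.choose_mul hj2, Nat.mul_assoc, Nat.mul_assoc]
    congr 1
    have e1 : n - i = (n - j) - (i - j) := by omega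
    have e2 : n - a = (n - j) - (a - j) := by omega
    rw [e1, e2, choose_sub_comm]
  · -- a > n : RHS has choose n a = 0; LHS has (n-i).choose (a-j) with a - j > n - i
    rw [Nat.choose_eq_zero_of_lt ha,
      Nat.choose_eq_zero_of_lt (by omega : n - i < a - j)]
    ring

lemma krawtchouk_gen {R : Type*} [CommRing R] (u v : R) {a n : ℕ} (ha : a ≤ n) :
    ∑ i ∈ range (n + 1), (K i a n : R) * u ^ i * v ^ (n - i)
      = (v - u) ^ a * (v + 3 * u) ^ (n - a) := by
  set g : ℕ → ℕ → R := fun j k =>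
    (-1 : R) ^ j * 3 ^ k * (a.choose j) * ((n - a).choose k) * u ^ (j + k) * v ^ (n - (j + k))
    with hg
  have step1 : ∑ i ∈ range (n + 1), (K i a n : R) * u ^ i * v ^ (n - i)
      = ∑ i ∈ range (n + 1), ∑ j ∈ range (i + 1), g j (i - j) := by
    refine sum_congr rfl fun i hi => ?_
    have : (K i a n : R) = ∑ j ∈ range (i + 1),
        (-1 : R) ^ j * 3 ^ (i - j) * (a.choose j) * ((n - a).choose (i - j)) := by
      unfold K; push_cast; rfl
    rw [this, sum_mul, sum_mul]
    refine sum_congr rfl fun j hj => ?_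
    have hji : j ≤ i := by simpa [Nat.lt_succ_iff] using hj
    simp only [hg]
    rw [show j + (i - j) = i from by omega]
  rw [step1, Finset.sum_range_diag_flip (n + 1) g]
  have step3 : ∑ j ∈ range (n + 1), ∑ k ∈ range (n + 1 - j), g j k
      = ∑ j ∈ range (a + 1), ∑ k ∈ range (n - a + 1), g j k := by
    rw [← Finset.sum_subset (Finset.range_subset_range.2 (by omega : a + 1 ≤ n + 1))]
    · refine sum_congr rfl fun j hj => ?_
      have hja : j ≤ a := by simpa [Nat.lt_succ_iff] using hj
      rw [← Finset.sum_subset (Finset.range_subset_range.2 (by omega : n - a + 1 ≤ n + 1 - j))]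
      intro k _ hk
      have : n - a < k := by simp [Nat.lt_succ_iff] at hk; omega
      simp [hg, Nat.choose_eq_zero_of_lt this]
    · intro j _ hj
      have : a < j := by simp [Nat.lt_succ_iff] at hj; omega
      exact Finset.sum_eq_zero fun k _ => by simp [hg, Nat.choose_eq_zero_of_lt this]
  rw [step3]
  have e1 : (v - u) ^ a = ∑ j ∈ range (a + 1), (-u) ^ j * v ^ (a - j) * (a.choose j : R) := by
    rw [show v - u = -u + v by ring, add_pow]
  have e2 : (v + 3 * u) ^ (n - a)
      = ∑ k ∈ range (n - a + 1), (3 * u) ^ k * v ^ (n - a - k) * ((n - a).choose k : R) := by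
    rw [show v + 3 * u = 3 * u + v by ring, add_pow]
  rw [e1, e2, Finset.sum_mul_sum]
  refine sum_congr rfl fun j hj => sum_congr rfl fun k hk => ?_
  have hja : j ≤ a := by simpa [Nat.lt_succ_iff] using hj
  have hkn : k ≤ n - a := by simpa [Nat.lt_succ_iff] using hk
  simp only [hg]
  have hv : v ^ (a - j) * v ^ (n - a - k) = v ^ (n - (j + k)) := by
    rw [← pow_add]; congr 1; omega
  rw [neg_pow, mul_pow, ← hv]
  ring

lemma poly_core {t n : ℕ} (ht : t ≤ n) :
    ((1 : ℤ[X]) - X) ^ t * (1 + 3 * X) ^ (n - t)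
      = ∑ m ∈ range (n + 1), (K m t n : ℤ[X]) * X ^ m := by
  have H := krawtchouk_gen (R := ℤ[X]) X 1 ht
  simp only [one_pow, mul_one] at H
  rw [← H]

lemma coeff_core {t n b : ℕ} (ht : t ≤ n) (hb : b ≤ n) :
    (((1 : ℤ[X]) - X) ^ t * (1 + 3 * X) ^ (n - t)).coeff b = K b t n := by
  rw [poly_core ht, Polynomial.finset_sum_coeff]
  have : ∀ m ∈ range (n + 1), ((K m t n : ℤ[X]) * X ^ m).coeff b
      = if b = m then K m t n else 0 := by
    intro m _
    rw [← Polynomial.C_eq_intCast, Polynomial.coeff_C_mul, Polynomial.coeff_X_pow]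
    split <;> simp
  rw [Finset.sum_congr rfl this, Finset.sum_ite_eq (range (n+1)) b (fun m => K m t n),
    if_pos (Finset.mem_range.2 (by omega))]

lemma krawtchouk_inv {a b n : ℕ} (ha : a ≤ n) (hb : b ≤ n) :
    ∑ i ∈ range (n + 1), K i a n * K b i n = if a = b then 4 ^ n else 0 := by
  have H := krawtchouk_gen (R := ℤ[X]) (1 - X) (1 + 3 * X) ha
  have hvu : ((1 : ℤ[X]) + 3 * X) - (1 - X) = 4 * X := by ring
  have hvu2 : ((1 : ℤ[X]) + 3 * X) + 3 * (1 - X) = 4 := by ring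
  rw [hvu, hvu2] at H
  have hR : ((4 : ℤ[X]) * X) ^ a * 4 ^ (n - a) = Polynomial.C (4 ^ n) * X ^ a := by
    rw [mul_pow, show ((4:ℤ[X]))^a * X ^ a * 4 ^ (n-a) = (4^a * 4^(n-a)) * X^a by ring,
      ← pow_add, show a + (n - a) = n from by omega]
    simp [Polynomial.C_pow]
  rw [hR] at H
  have := congrArg (fun p => Polynomial.coeff p b) H
  simp only [Polynomial.finset_sum_coeff] at this
  rw [Polynomial.coeff_C_mul, Polynomial.coeff_X_pow] at this
  have L : ∀ i ∈ range (n + 1), ((K i a n : ℤ[X]) * (1 - X) ^ i * (1 + 3 * X) ^ (n - i)).coeff b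
      = K i a n * K b i n := by
    intro i hi
    have hin : i ≤ n := by simpa [Nat.lt_succ_iff] using hi
    rw [mul_assoc, ← Polynomial.C_eq_intCast, Polynomial.coeff_C_mul, coeff_core hin hb]
    norm_cast
  rw [Finset.sum_congr rfl L] at this
  rw [this]
  by_cases h : a = b <;> simp [h, eq_comm]

lemma krawtchouk_recip {i a n : ℕ} (hi : i ≤ n) (ha : a ≤ n) :
    3 ^ i * (n.choose i : ℤ) * K a i n = 3 ^ a * (n.choose a : ℤ) * K i a n := by
  unfold K
  rw [Finset.mul_sum, Finset.mul_sum]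
  have h1 : ∑ j ∈ range (a + 1), (3:ℤ) ^ i * (n.choose i : ℤ) *
      ((-1 : ℤ) ^ j * 3 ^ (a - j) * (i.choose j) * ((n - i).choose (a - j)))
      = ∑ j ∈ range (min i a + 1), (3:ℤ) ^ i * (n.choose i : ℤ) *
      ((-1 : ℤ) ^ j * 3 ^ (a - j) * (i.choose j) * ((n - i).choose (a - j))) := by
    rw [← Finset.sum_subset (Finset.range_subset_range.2 (by omega : min i a + 1 ≤ a + 1))]
    intro j hjm hj
    have : i < j := by simp [Nat.lt_succ_iff] at hj hjm; omega
    simp [Nat.choose_eq_zero_of_lt this]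
  have h2 : ∑ j ∈ range (i + 1), (3:ℤ) ^ a * (n.choose a : ℤ) *
      ((-1 : ℤ) ^ j * 3 ^ (i - j) * (a.choose j) * ((n - a).choose (i - j)))
      = ∑ j ∈ range (min i a + 1), (3:ℤ) ^ a * (n.choose a : ℤ) *
      ((-1 : ℤ) ^ j * 3 ^ (i - j) * (a.choose j) * ((n - a).choose (i - j))) := by
    rw [← Finset.sum_subset (Finset.range_subset_range.2 (by omega : min i a + 1 ≤ i + 1))]
    intro j hjm hj
    have : a < j := by simp [Nat.lt_succ_iff] at hj hjm; omega
    simp [Nat.choose_eq_zero_of_lt this]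
  rw [h1, h2]
  refine Finset.sum_congr rfl fun j hj => ?_
  have hj1 : j ≤ i := by simp [Nat.lt_succ_iff] at hj; omega
  have hj2 : j ≤ a := by simp [Nat.lt_succ_iff] at hj; omega
  have hpow : (3:ℤ) ^ i * 3 ^ (a - j) = 3 ^ a * 3 ^ (i - j) := by
    rw [← pow_add, ← pow_add]; congr 1; omega
  have hnat := nat_id hj1 hj2 hi (a := a)
  calc (3:ℤ) ^ i * (n.choose i : ℤ) *
      ((-1 : ℤ) ^ j * 3 ^ (a - j) * (i.choose j) * ((n - i).choose (a - j)))
      = (-1:ℤ)^j * ((3:ℤ)^i * 3^(a-j)) *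
        ((n.choose i * (i.choose j * (n - i).choose (a - j)) : ℕ) : ℤ) := by push_cast; ring
    _ = (-1:ℤ)^j * ((3:ℤ)^a * 3^(i-j)) *
        ((n.choose a * (a.choose j * (n - a).choose (i - j)) : ℕ) : ℤ) := by rw [hpow, hnat]
    _ = 3 ^ a * (n.choose a : ℤ) *
      ((-1 : ℤ) ^ j * 3 ^ (i - j) * (a.choose j) * ((n - a).choose (i - j))) := by
        push_cast; ring

lemma K_at_zero (i n : ℕ) : K i 0 n = 3 ^ i * (n.choose i : ℤ) := by
  unfold K
  rw [Finset.sum_eq_single 0]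
  · simp
  · intro j _ hj
    obtain ⟨j, rfl⟩ := Nat.exists_eq_succ_of_ne_zero hj
    simp [Nat.choose_zero_succ]
  · simp

lemma fVal_zero_eq {e n : ℕ} (h : e ≤ n) :
    fVal e 0 n = 4 ^ n * ∑ m ∈ range (e + 1), 3 ^ m * (n.choose m : ℤ) := by
  unfold fVal fCoeff
  have expand : ∀ i, (∑ m ∈ range (e + 1), K m i n) ^ 2 * K i 0 n
      = ∑ m ∈ range (e + 1), ∑ m' ∈ range (e + 1),
          K m i n * K m' i n * (3 ^ i * (n.choose i : ℤ)) := by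
    intro i
    rw [sq, Finset.sum_mul_sum, Finset.sum_mul, K_at_zero]
    refine sum_congr rfl fun m _ => ?_
    rw [Finset.sum_mul]
  rw [Finset.sum_congr rfl fun i _ => expand i, Finset.sum_comm]
  have inner : ∀ m ∈ range (e + 1),
      (∑ i ∈ range (n + 1), ∑ m' ∈ range (e + 1),
        K m i n * K m' i n * (3 ^ i * (n.choose i : ℤ)))
      = 3 ^ m * (n.choose m : ℤ) * 4 ^ n := by
    intro m hm
    have hmn : m ≤ n := by simp [Nat.lt_succ_iff] at hm; omega
    rw [Finset.sum_comm]
    have inner2 : ∀ m' ∈ range (e + 1),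
        (∑ i ∈ range (n + 1), K m i n * K m' i n * (3 ^ i * (n.choose i : ℤ)))
        = 3 ^ m * (n.choose m : ℤ) * (if m = m' then 4 ^ n else 0) := by
      intro m' hm'
      have hm'n : m' ≤ n := by simp [Nat.lt_succ_iff] at hm'; omega
      have step : ∀ i ∈ range (n + 1),
          K m i n * K m' i n * (3 ^ i * (n.choose i : ℤ))
          = 3 ^ m * (n.choose m : ℤ) * (K i m n * K m' i n) := by
        intro i hi
        have hin : i ≤ n := by simp [Nat.lt_succ_iff] at hi; omega
        have := krawtchouk_recip hin hmn (a := m)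
        calc K m i n * K m' i n * (3 ^ i * (n.choose i : ℤ))
            = (3 ^ i * (n.choose i : ℤ) * K m i n) * K m' i n := by ring
          _ = (3 ^ m * (n.choose m : ℤ) * K i m n) * K m' i n := by rw [this]
          _ = 3 ^ m * (n.choose m : ℤ) * (K i m n * K m' i n) := by ring
      rw [Finset.sum_congr rfl step, ← Finset.mul_sum, krawtchouk_inv hmn hm'n]
    rw [Finset.sum_congr rfl inner2, ← Finset.mul_sum, Finset.sum_ite_eq (range (e+1)) m,
      if_pos hm]
  rw [Finset.sum_congr rfl inner, Finset.mul_sum]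
  exact Finset.sum_congr rfl fun m _ => by ring

noncomputable section
-- per-factor limit
lemma factor_lim (k : ℕ) :
    Tendsto (fun n : ℕ => ((n : ℝ) - k) / n) atTop (nhds 1) := by
  have h : Tendsto (fun n : ℕ => 1 - (k : ℝ) / n) atTop (nhds 1) := by
    simpa using tendsto_const_nhds.sub (tendsto_const_div_atTop_nhds_zero_nat (k : ℝ))
  refine h.congr' ?_
  filter_upwards [eventually_ge_atTop 1] with n hn
  have hn0 : (n : ℝ) ≠ 0 := by positivity
  field_simp

lemma prod_lim (m : ℕ) :
    Tendsto (fun n : ℕ => ∏ k ∈ range m, ((n : ℝ) - k) / n) atTop (nhds 1) := by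
  have := tendsto_finset_prod (f := fun (k : ℕ) (n : ℕ) => ((n : ℝ) - k) / n)
    (a := fun _ => (1 : ℝ)) (range m) (fun k _ => factor_lim k)
  simpa using this

lemma inv_pow_lim {d : ℕ} (hd : d ≠ 0) :
    Tendsto (fun n : ℕ => ((n : ℝ)⁻¹) ^ d) atTop (nhds 0) := by
  have h : Tendsto (fun n : ℕ => ((n : ℝ)⁻¹)) atTop (nhds 0) :=
    tendsto_inv_atTop_zero.comp tendsto_natCast_atTop_atTop
  simpa [zero_pow hd] using h.pow d
end

lemma term_lim (e m : ℕ) (hm : m ≤ e) :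
    Tendsto (fun n : ℕ => (3 : ℝ) ^ m / m.factorial *
        (∏ k ∈ range m, ((n : ℝ) - k) / n) * ((n : ℝ)⁻¹) ^ (e - m))
      atTop (nhds (if m = e then (3 : ℝ) ^ e / e.factorial else 0)) := by
  rcases eq_or_lt_of_le hm with rfl | hlt
  · simp only [Nat.sub_self, pow_zero, if_pos rfl, mul_one]
    have := (tendsto_const_nhds (x := (3:ℝ)^m / m.factorial)).mul (prod_lim m)
    simpa using this
  · rw [if_neg (by omega)]
    have := (tendsto_const_nhds (x := (3:ℝ)^m / m.factorial)).mul (prod_lim m)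
    have := this.mul (inv_pow_lim (d := e - m) (by omega))
    simpa using this

lemma sum_lim (e : ℕ) :
    Tendsto (fun n : ℕ => ∑ m ∈ range (e + 1), (3 : ℝ) ^ m / m.factorial *
        (∏ k ∈ range m, ((n : ℝ) - k) / n) * ((n : ℝ)⁻¹) ^ (e - m))
      atTop (nhds ((3 : ℝ) ^ e / e.factorial)) := by
  have := tendsto_finset_sum (range (e + 1))
    (fun m hm => term_lim e m (by simp [Nat.lt_succ_iff] at hm; omega))
  have hsum : (∑ m ∈ range (e + 1), if m = e then (3 : ℝ) ^ e / e.factorial else 0)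
      = (3 : ℝ) ^ e / e.factorial := by
    rw [Finset.sum_ite_eq' (range (e + 1)) e, if_pos (by simp)]
  rwa [hsum] at this

lemma term_eq {e m n : ℕ} (hm : m ≤ e) (hn : e + 1 ≤ n) :
    (3:ℝ)^m * (n.choose m : ℝ) / (n:ℝ)^e
      = 3^m / m.factorial * (∏ k ∈ range m, ((n:ℝ) - k)/n) * ((n:ℝ)⁻¹)^(e-m) := by
  have hn0 : (n:ℝ) ≠ 0 := Nat.cast_ne_zero.2 (by omega)
  have hfact : ((m.factorial : ℝ)) ≠ 0 := Nat.cast_ne_zero.2 m.factorial_ne_zero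
  have hprod : (∏ k ∈ range m, ((n:ℝ) - k)) = (m.factorial : ℝ) * (n.choose m : ℝ) := by
    have h1 : (n.descFactorial m : ℝ) = m.factorial * n.choose m := by
      exact_mod_cast congrArg (Nat.cast : ℕ → ℝ) (Nat.descFactorial_eq_factorial_mul_choose n m)
    rw [← h1, Nat.descFactorial_eq_prod_range, Nat.cast_prod]
    refine prod_congr rfl fun k hk => ?_
    have hk' : k ≤ n := by simp [Nat.lt_succ_iff] at hk; omega
    push_cast [Nat.cast_sub hk']
    ring
  have hpow : (n:ℝ)^m * (n:ℝ)^(e-m) = (n:ℝ)^e := by rw [← pow_add]; congr 1; omega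
  rw [prod_div_distrib, Finset.prod_const, card_range, hprod, ← hpow]
  field_simp
  simp [mul_assoc, ← mul_pow, hn0]

end

/-- Large-`n` asymptotics of `f(0; n)`: for fixed `e`,
`f(0; n) / (4^n · n^e) → 3^e / e!` as `n → ∞`. -/
theorem fVal_zero_asymptotics (e : ℕ) :
    Filter.Tendsto (fun n : ℕ => (fVal e 0 n : ℝ) / ((4 : ℝ) ^ n * (n : ℝ) ^ e))
      Filter.atTop (nhds ((3 : ℝ) ^ e / (e.factorial : ℝ))) := by
  refine (sum_lim e).congr' ?_
  filter_upwards [eventually_ge_atTop (e + 1)] with n hn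
  have h4 : ((4:ℝ)) ^ n ≠ 0 := by positivity
  have hfv : (fVal e 0 n : ℝ)
      = (4:ℝ) ^ n * ∑ m ∈ range (e + 1), (3:ℝ) ^ m * (n.choose m : ℝ) := by
    rw [fVal_zero_eq (by omega : e ≤ n)]
    push_cast
    ring
  rw [hfv, mul_div_mul_left _ _ h4, Finset.sum_div]
  exact (Finset.sum_congr rfl fun m hm =>
    (term_eq (by simp [Nat.lt_succ_iff] at hm; omega) hn)).symm
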